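/- Let N ≥ 1 and m ≥ 1 be integers. For all z, ξ ∈ 𝔹_N, applying the composition of differential operators (|E_ξ+m|²−Δ_ξ)∘(|E_ξ+(m−1)|²−Δ_ξ)∘⋯∘(|E_ξ+0|²−Δ_ξ) (acting in the variable ξ) to the function ξ ↦ (1−|ξ|²)/|1−⟨z,ξ⟩|² yields the same value at ξ as applying (|E_z|²−Δ_z) (acting in the variable z) to the function z ↦ (m!)²·(1−|z|²)^{m+1}/|1−⟨z,ξ⟩|^{2(m+1)}. -/

import Mathlib

open MeasureTheory Metric Complex ComplexConjugate Finset
open scoped ENNReal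

noncomputable section

/-- `ℂ^N` with its (product) Lebesgue measure; `EuclideanSpace ℂ (Fin N)` is definitionally
`Fin N → ℂ`. -/
instance (N : ℕ) : MeasureSpace (EuclideanSpace ℂ (Fin N)) :=
  { volume := (volume : Measure (Fin N → ℂ)).map (WithLp.toLp 2) }

variable {N : ℕ}

/-- Hermitian inner product `⟨z,w⟩ = Σ z_j conj(w_j)`. -/
def hinner (z w : EuclideanSpace ℂ (Fin N)) : ℂ := ∑ j, z j * conj (w j)

/-- Lebesgue measure on `ℂ^N` normalized so that the unit ball has measure 1. -/
def volB (N : ℕ) : Measure (EuclideanSpace ℂ (Fin N)) :=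
  (volume (ball (0 : EuclideanSpace ℂ (Fin N)) 1))⁻¹ • volume

/-- The Berezin transform of `u`. -/
def berezin (u : EuclideanSpace ℂ (Fin N) → ℂ) (z : EuclideanSpace ℂ (Fin N)) : ℂ :=
  (((1 - ‖z‖ ^ 2) ^ (N + 1) : ℝ) : ℂ) *
    ∫ ξ in ball (0 : EuclideanSpace ℂ (Fin N)) 1,
      u ξ / ((‖1 - hinner z ξ‖ ^ (2 * (N + 1)) : ℝ) : ℂ) ∂(volB N)

/-- Pluriharmonic on the unit ball: sum of a holomorphic and an anti-holomorphic function. -/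
def Pluriharmonic (h : EuclideanSpace ℂ (Fin N) → ℂ) : Prop :=
  ∃ f g : EuclideanSpace ℂ (Fin N) → ℂ,
    DifferentiableOn ℂ f (ball 0 1) ∧ DifferentiableOn ℂ g (ball 0 1) ∧
      ∀ z ∈ ball (0 : EuclideanSpace ℂ (Fin N)) 1, h z = f z + conj (g z)

/-- `B(u)` has finite rank: it is a finite sum `Σ f_j conj(g_j)` with `f_j, g_j` holomorphic. -/
def FiniteRankBerezin (u : EuclideanSpace ℂ (Fin N) → ℂ) : Prop :=
  ∃ (n : ℕ) (f g : Fin n → EuclideanSpace ℂ (Fin N) → ℂ),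
    (∀ j, DifferentiableOn ℂ (f j) (ball 0 1)) ∧
    (∀ j, DifferentiableOn ℂ (g j) (ball 0 1)) ∧
    ∀ z ∈ ball (0 : EuclideanSpace ℂ (Fin N)) 1,
      berezin u z = ∑ j, f j z * conj (g j z)

/-- Wirtinger derivative `∂/∂z_j`. -/
def wdz (j : Fin N) (f : EuclideanSpace ℂ (Fin N) → ℂ) (z : EuclideanSpace ℂ (Fin N)) : ℂ :=
  (1 / 2 : ℂ) * (fderiv ℝ f z (EuclideanSpace.single j 1)
    - Complex.I * fderiv ℝ f z (EuclideanSpace.single j Complex.I))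

/-- Wirtinger derivative `∂/∂conj(z_j)`. -/
def wdzbar (j : Fin N) (f : EuclideanSpace ℂ (Fin N) → ℂ) (z : EuclideanSpace ℂ (Fin N)) : ℂ :=
  (1 / 2 : ℂ) * (fderiv ℝ f z (EuclideanSpace.single j 1)
    + Complex.I * fderiv ℝ f z (EuclideanSpace.single j Complex.I))

/-- The radial operator `E = Σ z_j ∂/∂z_j`. -/
def Eop (f : EuclideanSpace ℂ (Fin N) → ℂ) (z : EuclideanSpace ℂ (Fin N)) : ℂ :=
  ∑ j, z j * wdz j f z

/-- The radial operator `Ē = Σ conj(z_j) ∂/∂conj(z_j)`. -/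
def Ebarop (f : EuclideanSpace ℂ (Fin N) → ℂ) (z : EuclideanSpace ℂ (Fin N)) : ℂ :=
  ∑ j, conj (z j) * wdzbar j f z

/-- The Laplacian `Δ = Σ ∂²/(∂z_j ∂conj(z_j))`. -/
def lapOp (f : EuclideanSpace ℂ (Fin N) → ℂ) (z : EuclideanSpace ℂ (Fin N)) : ℂ :=
  ∑ j, wdz j (wdzbar j f) z

/-- The operator `|E+s|² − Δ = (E+s)∘(Ē+s) − Δ`. -/
def stepOp (s : ℝ) (f : EuclideanSpace ℂ (Fin N) → ℂ) : EuclideanSpace ℂ (Fin N) → ℂ :=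
  fun z => (Eop (fun w => Ebarop f w + (s : ℂ) * f w) z
      + (s : ℂ) * (Ebarop f z + (s : ℂ) * f z)) - lapOp f z

/-- The composition `(|E+m|²−Δ)∘(|E+(m−1)|²−Δ)∘⋯∘(|E+0|²−Δ)`. -/
def iterOp : ℕ → (EuclideanSpace ℂ (Fin N) → ℂ) → (EuclideanSpace ℂ (Fin N) → ℂ)
  | 0 => stepOp 0
  | (m + 1) => fun f => stepOp (m + 1) (iterOp m f)

/-- The invariant Laplacian `Δ̃ = (1−|z|²)(Δ − |E|²)`. -/
def invLap (f : EuclideanSpace ℂ (Fin N) → ℂ) (z : EuclideanSpace ℂ (Fin N)) : ℂ :=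
  (((1 - ‖z‖ ^ 2 : ℝ)) : ℂ) * (lapOp f z - Eop (Ebarop f) z)

/-- The operator `c − Δ̃` (a single factor of `p_m(Δ̃)`). -/
def factorOp (c : ℂ) (f : EuclideanSpace ℂ (Fin N) → ℂ) : EuclideanSpace ℂ (Fin N) → ℂ :=
  fun z => c * f z - invLap f z

/-- The product of operators `∏_{j=0}^{m} (j(j−N) − Δ̃)`. -/
def prodOp (N : ℕ) : ℕ → (EuclideanSpace ℂ (Fin N) → ℂ) → (EuclideanSpace ℂ (Fin N) → ℂ)
  | 0 => factorOp ((0 : ℂ) * ((0 : ℂ) - (N : ℂ)))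
  | (m + 1) => fun f => factorOp (((m : ℂ) + 1) * (((m : ℂ) + 1) - (N : ℂ))) (prodOp N m f)

open Classical in
/-- The Möbius automorphism `φ_w` of the unit ball interchanging `0` and `w`. -/
def mobius (w z : EuclideanSpace ℂ (Fin N)) : EuclideanSpace ℂ (Fin N) :=
  ((1 - hinner z w)⁻¹ : ℂ) •
    (w - (if w = 0 then 0 else (hinner z w / hinner w w) • w)
      - ((Real.sqrt (1 - ‖w‖ ^ 2) : ℝ) : ℂ) •
        (z - (if w = 0 then 0 else (hinner z w / hinner w w) • w)))

section Aux
variable {N : ℕ}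
local notation "Es" => EuclideanSpace ℂ (Fin N)

def Qf (ζ w : Es) : ℂ := 1 - hinner ζ w
def Bf (ζ w : Es) : ℂ := 1 - hinner w ζ
def Xf (w : Es) : ℂ := 1 - hinner w w
def mon (ζ : Es) (p : ℕ) (s t : ℤ) (w : Es) : ℂ :=
  Xf w ^ p * Qf ζ w ^ s * Bf ζ w ^ t

lemma conj_hinner (z w : Es) : conj (hinner z w) = hinner w z := by
  simp only [hinner, map_sum, map_mul, Complex.conj_conj]
  exact Finset.sum_congr rfl fun j _ => by rw [mul_comm]

lemma hinner_eq_inner (z w : Es) : hinner z w = (inner ℂ w z : ℂ) := by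
  simp only [hinner, PiLp.inner_apply, RCLike.inner_apply']
  exact Finset.sum_congr rfl fun j _ => by rw [mul_comm]

lemma hinner_self (w : Es) : hinner w w = ((‖w‖ ^ 2 : ℝ) : ℂ) := by
  rw [hinner_eq_inner, inner_self_eq_norm_sq_to_K]; norm_num

lemma Bf_eq_conj (ζ w : Es) : Bf ζ w = conj (Qf ζ w) := by
  simp [Bf, Qf, map_sub, conj_hinner]

lemma Qf_ne_zero {ζ w : Es} (hz : ‖ζ‖ < 1) (hw : ‖w‖ < 1) : Qf ζ w ≠ 0 := by
  have h1 : ‖hinner ζ w‖ < 1 := by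
    rw [hinner_eq_inner]
    calc ‖(inner ℂ w ζ : ℂ)‖ ≤ ‖w‖ * ‖ζ‖ := norm_inner_le_norm w ζ
    _ < 1 := by nlinarith [norm_nonneg w, norm_nonneg ζ]
  intro h
  have : hinner ζ w = 1 := by rw [Qf, sub_eq_zero] at h; exact h.symm
  rw [this] at h1; simp at h1
end Aux
section Aux2
variable {N : ℕ}
local notation "Es" => EuclideanSpace ℂ (Fin N)

def coordL (j : Fin N) : Es →L[ℝ] ℂ :=
  (EuclideanSpace.proj j : Es →L[ℂ] ℂ).restrictScalars ℝ

def conjL (j : Fin N) : Es →L[ℝ] ℂ :=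
  (Complex.conjCLE : ℂ ≃L[ℝ] ℂ).toContinuousLinearMap.comp (coordL j)

@[simp] lemma coordL_apply (j : Fin N) (v : Es) : coordL j v = v j := rfl
@[simp] lemma conjL_apply (j : Fin N) (v : Es) : conjL j v = conj (v j) := rfl

lemma hasF_Q (ζ : Es) (w : Es) :
    HasFDerivAt (Qf ζ) (-(∑ j, ζ j • conjL j) : Es →L[ℝ] ℂ) w := by
  have h : HasFDerivAt (fun w : Es => hinner ζ w) (∑ j, ζ j • conjL j) w := by
    apply HasFDerivAt.fun_sum
    intro j _
    exact ((conjL j).hasFDerivAt).const_mul (ζ j)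
  have h' := (hasFDerivAt_const (1:ℂ) w).fun_sub h
  simp only [zero_sub] at h'
  exact h'

lemma hasF_B (ζ : Es) (w : Es) :
    HasFDerivAt (Bf ζ) (-(∑ j, conj (ζ j) • coordL j) : Es →L[ℝ] ℂ) w := by
  have h : HasFDerivAt (fun w : Es => hinner w ζ) (∑ j, conj (ζ j) • coordL j) w := by
    apply HasFDerivAt.fun_sum
    intro j _
    simpa [mul_comm] using ((coordL j).hasFDerivAt (x := w)).mul_const (conj (ζ j))
  have h' := (hasFDerivAt_const (1:ℂ) w).fun_sub h
  simp only [zero_sub] at h'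
  exact h'

lemma hasF_X (w : Es) :
    HasFDerivAt (Xf : Es → ℂ)
      (-(∑ j : Fin N, (w j • conjL j + conj (w j) • coordL j)) : Es →L[ℝ] ℂ) w := by
  have h : HasFDerivAt (fun w : Es => hinner w w)
      (∑ j : Fin N, (w j • conjL j + conj (w j) • coordL j) : Es →L[ℝ] ℂ) w := by
    apply HasFDerivAt.fun_sum
    intro j _
    exact ((coordL j).hasFDerivAt (x := w)).mul ((conjL j).hasFDerivAt (x := w))
  have h' := (hasFDerivAt_const (1:ℂ) w).fun_sub h
  simp only [zero_sub] at h'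
  exact h'

lemma diff_Q (ζ : Es) (w : Es) : DifferentiableAt ℝ (Qf ζ) w := (hasF_Q ζ w).differentiableAt
lemma diff_B (ζ : Es) (w : Es) : DifferentiableAt ℝ (Bf ζ) w := (hasF_B ζ w).differentiableAt
lemma diff_X (w : Es) : DifferentiableAt ℝ (Xf : Es → ℂ) w := (hasF_X w).differentiableAt

lemma wdz_of_hasF {f : Es → ℂ} {L : Es →L[ℝ] ℂ} {w : Es} (h : HasFDerivAt f L w) (j : Fin N) :
    wdz j f w = (1/2 : ℂ) * (L (EuclideanSpace.single j 1)
      - Complex.I * L (EuclideanSpace.single j Complex.I)) := by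
  rw [wdz, h.fderiv]

lemma wdzbar_of_hasF {f : Es → ℂ} {L : Es →L[ℝ] ℂ} {w : Es} (h : HasFDerivAt f L w) (j : Fin N) :
    wdzbar j f w = (1/2 : ℂ) * (L (EuclideanSpace.single j 1)
      + Complex.I * L (EuclideanSpace.single j Complex.I)) := by
  rw [wdzbar, h.fderiv]

lemma sum_smul_conjL_apply (c : Fin N → ℂ) (j : Fin N) (a : ℂ) :
    (∑ k, c k • conjL k : Es →L[ℝ] ℂ) (EuclideanSpace.single j a) = c j * conj a := by
  rw [ContinuousLinearMap.sum_apply, Finset.sum_eq_single j]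
  · simp [EuclideanSpace.single_apply]
  · intro k _ hk
    simp [EuclideanSpace.single_apply, hk]
  · simp

lemma sum_smul_coordL_apply (c : Fin N → ℂ) (j : Fin N) (a : ℂ) :
    (∑ k, c k • coordL k : Es →L[ℝ] ℂ) (EuclideanSpace.single j a) = c j * a := by
  rw [ContinuousLinearMap.sum_apply, Finset.sum_eq_single j]
  · simp [EuclideanSpace.single_apply]
  · intro k _ hk
    simp [EuclideanSpace.single_apply, hk]
  · simp

lemma wdz_Qf (ζ : Es) (w : Es) (j : Fin N) : wdz j (Qf ζ) w = 0 := by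
  rw [wdz_of_hasF (hasF_Q ζ w) j]
  simp only [ContinuousLinearMap.neg_apply, sum_smul_conjL_apply, Complex.conj_I, map_one]
  ring_nf
  rw [Complex.I_sq]; ring

lemma wdzbar_Qf (ζ : Es) (w : Es) (j : Fin N) : wdzbar j (Qf ζ) w = -ζ j := by
  rw [wdzbar_of_hasF (hasF_Q ζ w) j]
  simp only [ContinuousLinearMap.neg_apply, sum_smul_conjL_apply, Complex.conj_I, map_one]
  ring_nf
  rw [Complex.I_sq]; ring

lemma wdz_Bf (ζ : Es) (w : Es) (j : Fin N) : wdz j (Bf ζ) w = -conj (ζ j) := by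
  rw [wdz_of_hasF (hasF_B ζ w) j]
  simp only [ContinuousLinearMap.neg_apply, sum_smul_coordL_apply]
  ring_nf
  rw [Complex.I_sq]; ring

lemma wdzbar_Bf (ζ : Es) (w : Es) (j : Fin N) : wdzbar j (Bf ζ) w = 0 := by
  rw [wdzbar_of_hasF (hasF_B ζ w) j]
  simp only [ContinuousLinearMap.neg_apply, sum_smul_coordL_apply]
  ring_nf
  rw [Complex.I_sq]; ring

lemma wdz_Xf (w : Es) (j : Fin N) : wdz j (Xf : Es → ℂ) w = -conj (w j) := by
  rw [wdz_of_hasF (hasF_X w) j]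
  simp only [ContinuousLinearMap.neg_apply, ContinuousLinearMap.sum_apply,
    ContinuousLinearMap.add_apply, ContinuousLinearMap.smul_apply, coordL_apply, conjL_apply,
    EuclideanSpace.single_apply, smul_eq_mul, apply_ite, mul_ite, mul_zero, map_zero, map_one,
    Complex.conj_I, Finset.sum_add_distrib, Finset.sum_ite_eq', Finset.mem_univ, if_true]
  ring_nf
  rw [Complex.I_sq]; ring

lemma wdzbar_Xf (w : Es) (j : Fin N) : wdzbar j (Xf : Es → ℂ) w = -(w j) := by
  rw [wdzbar_of_hasF (hasF_X w) j]
  simp only [ContinuousLinearMap.neg_apply, ContinuousLinearMap.sum_apply,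
    ContinuousLinearMap.add_apply, ContinuousLinearMap.smul_apply, coordL_apply, conjL_apply,
    EuclideanSpace.single_apply, smul_eq_mul, apply_ite, mul_ite, mul_zero, map_zero, map_one,
    Complex.conj_I, Finset.sum_add_distrib, Finset.sum_ite_eq', Finset.mem_univ, if_true]
  ring_nf
  rw [Complex.I_sq]; ring

lemma wdz_coord (w : Es) (j : Fin N) : wdz j (fun w : Es => w j) w = 1 := by
  rw [wdz_of_hasF (show HasFDerivAt (fun w : Es => w j) (coordL j) w from
    (coordL j).hasFDerivAt) j]
  simp [EuclideanSpace.single_apply, Complex.ext_iff]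
  norm_num

lemma wdzbar_coord (w : Es) (j : Fin N) : wdzbar j (fun w : Es => w j) w = 0 := by
  rw [wdzbar_of_hasF (show HasFDerivAt (fun w : Es => w j) (coordL j) w from
    (coordL j).hasFDerivAt) j]
  simp [EuclideanSpace.single_apply, Complex.ext_iff]

end Aux2
section Aux3
variable {N : ℕ}
local notation "Es" => EuclideanSpace ℂ (Fin N)

lemma wdz_congr {f g : Es → ℂ} {w : Es} (h : f =ᶠ[nhds w] g) (j : Fin N) :
    wdz j f w = wdz j g w := by
  rw [wdz, wdz, h.fderiv_eq]

lemma wdzbar_congr {f g : Es → ℂ} {w : Es} (h : f =ᶠ[nhds w] g) (j : Fin N) :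
    wdzbar j f w = wdzbar j g w := by
  rw [wdzbar, wdzbar, h.fderiv_eq]

lemma wdz_add {f g : Es → ℂ} {w : Es} (hf : DifferentiableAt ℝ f w)
    (hg : DifferentiableAt ℝ g w) (j : Fin N) :
    wdz j (fun w => f w + g w) w = wdz j f w + wdz j g w := by
  simp only [wdz, fderiv_fun_add hf hg, ContinuousLinearMap.add_apply]; ring

lemma wdzbar_add {f g : Es → ℂ} {w : Es} (hf : DifferentiableAt ℝ f w)
    (hg : DifferentiableAt ℝ g w) (j : Fin N) :
    wdzbar j (fun w => f w + g w) w = wdzbar j f w + wdzbar j g w := by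
  simp only [wdzbar, fderiv_fun_add hf hg, ContinuousLinearMap.add_apply]; ring

lemma wdz_const_mul {f : Es → ℂ} {w : Es} (c : ℂ) (hf : DifferentiableAt ℝ f w) (j : Fin N) :
    wdz j (fun w => c * f w) w = c * wdz j f w := by
  simp only [wdz, fderiv_const_mul hf c, ContinuousLinearMap.smul_apply, smul_eq_mul]; ring

lemma wdzbar_const_mul {f : Es → ℂ} {w : Es} (c : ℂ) (hf : DifferentiableAt ℝ f w) (j : Fin N) :
    wdzbar j (fun w => c * f w) w = c * wdzbar j f w := by
  simp only [wdzbar, fderiv_const_mul hf c, ContinuousLinearMap.smul_apply, smul_eq_mul]; ring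

lemma wdz_mul {f g : Es → ℂ} {w : Es} (hf : DifferentiableAt ℝ f w)
    (hg : DifferentiableAt ℝ g w) (j : Fin N) :
    wdz j (fun w => f w * g w) w = f w * wdz j g w + g w * wdz j f w := by
  simp only [wdz, fderiv_fun_mul hf hg, ContinuousLinearMap.add_apply,
    ContinuousLinearMap.smul_apply, smul_eq_mul]; ring

lemma wdzbar_mul {f g : Es → ℂ} {w : Es} (hf : DifferentiableAt ℝ f w)
    (hg : DifferentiableAt ℝ g w) (j : Fin N) :
    wdzbar j (fun w => f w * g w) w = f w * wdzbar j g w + g w * wdzbar j f w := by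
  simp only [wdzbar, fderiv_fun_mul hf hg, ContinuousLinearMap.add_apply,
    ContinuousLinearMap.smul_apply, smul_eq_mul]; ring

lemma wdz_of_smul_hasF {f g : Es → ℂ} {w : Es} {c : ℂ} {L : Es →L[ℝ] ℂ}
    (hg : HasFDerivAt g (c • L) w) (hf : HasFDerivAt f L w) (j : Fin N) :
    wdz j g w = c * wdz j f w := by
  rw [wdz_of_hasF hg j, wdz_of_hasF hf j]
  simp only [ContinuousLinearMap.smul_apply, smul_eq_mul]; ring

lemma wdzbar_of_smul_hasF {f g : Es → ℂ} {w : Es} {c : ℂ} {L : Es →L[ℝ] ℂ}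
    (hg : HasFDerivAt g (c • L) w) (hf : HasFDerivAt f L w) (j : Fin N) :
    wdzbar j g w = c * wdzbar j f w := by
  rw [wdzbar_of_hasF hg j, wdzbar_of_hasF hf j]
  simp only [ContinuousLinearMap.smul_apply, smul_eq_mul]; ring

lemma hasF_pow {f : Es → ℂ} {w : Es} {L : Es →L[ℝ] ℂ} (hf : HasFDerivAt f L w) (p : ℕ) :
    HasFDerivAt (fun w => f w ^ p) (((p : ℂ) * f w ^ (p - 1)) • L) w :=
  (hasDerivAt_pow p (f w)).comp_hasFDerivAt w hf

lemma hasF_zpow {f : Es → ℂ} {w : Es} {L : Es →L[ℝ] ℂ} (hf : HasFDerivAt f L w)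
    (h0 : f w ≠ 0) (s : ℤ) :
    HasFDerivAt (fun w => f w ^ s) (((s : ℂ) * f w ^ (s - 1)) • L) w :=
  (hasDerivAt_zpow s (f w) (Or.inl h0)).comp_hasFDerivAt w hf

lemma wdz_pow {f : Es → ℂ} {w : Es} {L : Es →L[ℝ] ℂ} (hf : HasFDerivAt f L w)
    (p : ℕ) (j : Fin N) :
    wdz j (fun w => f w ^ p) w = (p : ℂ) * f w ^ (p - 1) * wdz j f w := by
  rw [wdz_of_smul_hasF (hasF_pow hf p) hf j]

lemma wdzbar_pow {f : Es → ℂ} {w : Es} {L : Es →L[ℝ] ℂ} (hf : HasFDerivAt f L w)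
    (p : ℕ) (j : Fin N) :
    wdzbar j (fun w => f w ^ p) w = (p : ℂ) * f w ^ (p - 1) * wdzbar j f w := by
  rw [wdzbar_of_smul_hasF (hasF_pow hf p) hf j]

lemma wdz_zpow {f : Es → ℂ} {w : Es} {L : Es →L[ℝ] ℂ} (hf : HasFDerivAt f L w)
    (h0 : f w ≠ 0) (s : ℤ) (j : Fin N) :
    wdz j (fun w => f w ^ s) w = (s : ℂ) * f w ^ (s - 1) * wdz j f w := by
  rw [wdz_of_smul_hasF (hasF_zpow hf h0 s) hf j]

lemma wdzbar_zpow {f : Es → ℂ} {w : Es} {L : Es →L[ℝ] ℂ} (hf : HasFDerivAt f L w)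
    (h0 : f w ≠ 0) (s : ℤ) (j : Fin N) :
    wdzbar j (fun w => f w ^ s) w = (s : ℂ) * f w ^ (s - 1) * wdzbar j f w := by
  rw [wdzbar_of_smul_hasF (hasF_zpow hf h0 s) hf j]

end Aux3
section Aux4
variable {N : ℕ}
local notation "Es" => EuclideanSpace ℂ (Fin N)

lemma Bf_ne_zero {ζ w : Es} (hq : Qf ζ w ≠ 0) : Bf ζ w ≠ 0 := by
  rw [Bf_eq_conj]
  intro h
  exact hq (by simpa using congrArg conj h)

lemma diff_powX {w : Es} (p : ℕ) : DifferentiableAt ℝ (fun w : Es => Xf w ^ p) w :=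
  (hasF_pow (hasF_X w) p).differentiableAt

lemma diff_zpowQ {ζ w : Es} (hq : Qf ζ w ≠ 0) (s : ℤ) :
    DifferentiableAt ℝ (fun w : Es => Qf ζ w ^ s) w :=
  (hasF_zpow (hasF_Q ζ w) hq s).differentiableAt

lemma diff_zpowB {ζ w : Es} (hq : Qf ζ w ≠ 0) (t : ℤ) :
    DifferentiableAt ℝ (fun w : Es => Bf ζ w ^ t) w :=
  (hasF_zpow (hasF_B ζ w) (Bf_ne_zero hq) t).differentiableAt

lemma diff_mon {ζ w : Es} (hq : Qf ζ w ≠ 0) (p : ℕ) (s t : ℤ) :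
    DifferentiableAt ℝ (mon ζ p s t) w :=
  ((diff_powX p).mul (diff_zpowQ hq s)).mul (diff_zpowB hq t)

lemma diff_coord {w : Es} (j : Fin N) : DifferentiableAt ℝ (fun w : Es => w j) w :=
  (show HasFDerivAt (fun w : Es => w j) (coordL j) w from (coordL j).hasFDerivAt).differentiableAt

lemma wdz_mon {ζ w : Es} (hq : Qf ζ w ≠ 0) (p : ℕ) (s t : ℤ) (j : Fin N) :
    wdz j (mon ζ p s t) w =
      -((p : ℂ) * conj (w j) * mon ζ (p - 1) s t w)
        - (t : ℂ) * conj (ζ j) * mon ζ p s (t - 1) w := by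
  rw [show mon ζ p s t = fun w => (Xf w ^ p * Qf ζ w ^ s) * Bf ζ w ^ t from rfl]
  rw [wdz_mul ((diff_powX p).fun_mul (diff_zpowQ hq s)) (diff_zpowB hq t) j,
    wdz_mul (diff_powX p) (diff_zpowQ hq s) j,
    wdz_pow (hasF_X w) p j, wdz_zpow (hasF_Q ζ w) hq s j,
    wdz_zpow (hasF_B ζ w) (Bf_ne_zero hq) t j,
    wdz_Xf w j, wdz_Qf ζ w j, wdz_Bf ζ w j]
  simp only [mon]
  ring

lemma wdzbar_mon {ζ w : Es} (hq : Qf ζ w ≠ 0) (p : ℕ) (s t : ℤ) (j : Fin N) :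
    wdzbar j (mon ζ p s t) w =
      -((p : ℂ) * (w j) * mon ζ (p - 1) s t w)
        - (s : ℂ) * (ζ j) * mon ζ p (s - 1) t w := by
  rw [show mon ζ p s t = fun w => (Xf w ^ p * Qf ζ w ^ s) * Bf ζ w ^ t from rfl]
  rw [wdzbar_mul ((diff_powX p).fun_mul (diff_zpowQ hq s)) (diff_zpowB hq t) j,
    wdzbar_mul (diff_powX p) (diff_zpowQ hq s) j,
    wdzbar_pow (hasF_X w) p j, wdzbar_zpow (hasF_Q ζ w) hq s j,
    wdzbar_zpow (hasF_B ζ w) (Bf_ne_zero hq) t j,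
    wdzbar_Xf w j, wdzbar_Qf ζ w j, wdzbar_Bf ζ w j]
  simp only [mon]
  ring

lemma eventually_Qf_ne {ζ w : Es} (hq : Qf ζ w ≠ 0) : ∀ᶠ w' in nhds w, Qf ζ w' ≠ 0 :=
  (diff_Q ζ w).continuousAt.eventually_ne hq

lemma eventuallyEq_of_U {ζ w : Es} (hq : Qf ζ w ≠ 0) {f g : Es → ℂ}
    (h : ∀ w' : Es, Qf ζ w' ≠ 0 → f w' = g w') : f =ᶠ[nhds w] g :=
  (eventually_Qf_ne hq).mono fun w' hw' => h w' hw'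

-- sums
lemma sum_ww (w : Es) : ∑ j, w j * conj (w j) = hinner w w := rfl
lemma sum_wz (w ζ : Es) : ∑ j, w j * conj (ζ j) = hinner w ζ := rfl
lemma sum_cwz (w ζ : Es) : ∑ j, conj (w j) * ζ j = hinner ζ w := by
  rw [hinner]; exact Finset.sum_congr rfl fun j _ => mul_comm _ _

lemma Eop_mon {ζ w : Es} (hq : Qf ζ w ≠ 0) (p : ℕ) (s t : ℤ) :
    Eop (mon ζ p s t) w =
      -((p : ℂ) * hinner w w * mon ζ (p - 1) s t w)
        - (t : ℂ) * hinner w ζ * mon ζ p s (t - 1) w := by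
  rw [Eop]
  calc ∑ j, w j * wdz j (mon ζ p s t) w
      = ∑ j, (-((p : ℂ) * mon ζ (p - 1) s t w * (w j * conj (w j)))
          - (t : ℂ) * mon ζ p s (t - 1) w * (w j * conj (ζ j))) := by
        refine Finset.sum_congr rfl fun j _ => ?_
        rw [wdz_mon hq p s t j]; ring
    _ = -((p : ℂ) * mon ζ (p - 1) s t w * ∑ j, (w j * conj (w j)))
          - (t : ℂ) * mon ζ p s (t - 1) w * ∑ j, (w j * conj (ζ j)) := by
        rw [Finset.sum_sub_distrib, Finset.mul_sum, Finset.mul_sum]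
        simp [Finset.sum_neg_distrib]
    _ = _ := by rw [sum_ww, sum_wz]; ring

lemma Ebarop_mon {ζ w : Es} (hq : Qf ζ w ≠ 0) (p : ℕ) (s t : ℤ) :
    Ebarop (mon ζ p s t) w =
      -((p : ℂ) * hinner w w * mon ζ (p - 1) s t w)
        - (s : ℂ) * hinner ζ w * mon ζ p (s - 1) t w := by
  rw [Ebarop]
  calc ∑ j, conj (w j) * wdzbar j (mon ζ p s t) w
      = ∑ j, (-((p : ℂ) * mon ζ (p - 1) s t w * (w j * conj (w j)))
          - (s : ℂ) * mon ζ p (s - 1) t w * (conj (w j) * ζ j)) := by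
        refine Finset.sum_congr rfl fun j _ => ?_
        rw [wdzbar_mon hq p s t j]; ring
    _ = -((p : ℂ) * mon ζ (p - 1) s t w * ∑ j, (w j * conj (w j)))
          - (s : ℂ) * mon ζ p (s - 1) t w * ∑ j, (conj (w j) * ζ j) := by
        rw [Finset.sum_sub_distrib, Finset.mul_sum, Finset.mul_sum]
        simp [Finset.sum_neg_distrib]
    _ = _ := by rw [sum_ww, sum_cwz]; ring

end Aux4
section Aux5
variable {N : ℕ}
local notation "Es" => EuclideanSpace ℂ (Fin N)

/-- explicit formula for `wdzbar j (mon ζ p s t)` as a function. -/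
def gmon (ζ : Es) (p : ℕ) (s t : ℤ) (j : Fin N) : Es → ℂ := fun w =>
  (-(p : ℂ)) * (w j * mon ζ (p - 1) s t w) + (-(s : ℂ)) * (ζ j * mon ζ p (s - 1) t w)

lemma wdzbar_mon_eq_gmon {ζ : Es} (p : ℕ) (s t : ℤ) (j : Fin N) {w' : Es}
    (h : Qf ζ w' ≠ 0) : wdzbar j (mon ζ p s t) w' = gmon ζ p s t j w' := by
  rw [wdzbar_mon h p s t j, gmon]; ring

lemma diff_gmon {ζ w : Es} (hq : Qf ζ w ≠ 0) (p : ℕ) (s t : ℤ) (j : Fin N) :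
    DifferentiableAt ℝ (gmon ζ p s t j) w := by
  exact ((((diff_coord j).mul (diff_mon hq _ _ _)).const_mul _).add
    (((diff_mon hq _ _ _).const_mul _).const_mul _))

lemma gmon_eventuallyEq {ζ w : Es} (hq : Qf ζ w ≠ 0) (p : ℕ) (s t : ℤ) (j : Fin N) :
    (fun w' => wdzbar j (mon ζ p s t) w') =ᶠ[nhds w] gmon ζ p s t j :=
  eventuallyEq_of_U hq fun w' h' => wdzbar_mon_eq_gmon p s t j h'

lemma wdz_gmon {ζ w : Es} (hq : Qf ζ w ≠ 0) (p : ℕ) (s t : ℤ) (j : Fin N) :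
    wdz j (gmon ζ p s t j) w =
      (-(p : ℂ)) * (w j * (-((((p:ℕ) - 1 : ℕ) : ℂ) * conj (w j) * mon ζ (p - 1 - 1) s t w)
          - (t : ℂ) * conj (ζ j) * mon ζ (p - 1) s (t - 1) w) + mon ζ (p - 1) s t w)
        + (-(s : ℂ)) * (ζ j * (-((p : ℂ) * conj (w j) * mon ζ (p - 1) (s - 1) t w)
          - (t : ℂ) * conj (ζ j) * mon ζ p (s - 1) (t - 1) w)) := by
  rw [show gmon ζ p s t j = (fun w => (-(p : ℂ)) * (w j * mon ζ (p - 1) s t w)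
      + (-(s : ℂ)) * (ζ j * mon ζ p (s - 1) t w)) from rfl]
  rw [wdz_add (((diff_coord j).fun_mul (diff_mon hq _ _ _)).const_mul _)
      (((diff_mon hq _ _ _).const_mul _).const_mul _) j]
  rw [wdz_const_mul _ ((diff_coord j).fun_mul (diff_mon hq _ _ _)) j]
  rw [wdz_const_mul _ ((diff_mon hq _ _ _).const_mul _) j]
  rw [wdz_mul (diff_coord j) (diff_mon hq _ _ _) j]
  rw [wdz_const_mul _ (diff_mon hq _ _ _) j]
  rw [wdz_coord w j, wdz_mon hq (p-1) s t j, wdz_mon hq p (s-1) t j]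
  ring

lemma lap_mon {ζ w : Es} (hq : Qf ζ w ≠ 0) (p : ℕ) (s t : ℤ) :
    lapOp (mon ζ p s t) w =
      (p : ℂ) * (((p : ℕ) - 1 : ℕ) : ℂ) * hinner w w * mon ζ (p - 2) s t w
        + (p : ℂ) * (t : ℂ) * hinner w ζ * mon ζ (p - 1) s (t - 1) w
        - (p : ℂ) * (N : ℂ) * mon ζ (p - 1) s t w
        + (s : ℂ) * (p : ℂ) * hinner ζ w * mon ζ (p - 1) (s - 1) t w
        + (s : ℂ) * (t : ℂ) * hinner ζ ζ * mon ζ p (s - 1) (t - 1) w := by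
  rw [lapOp]
  have key : ∀ j : Fin N, wdz j (wdzbar j (mon ζ p s t)) w = wdz j (gmon ζ p s t j) w :=
    fun j => wdz_congr (gmon_eventuallyEq hq p s t j) j
  calc ∑ j, wdz j (wdzbar j (mon ζ p s t)) w
      = ∑ j, ((p : ℂ) * (((p : ℕ) - 1 : ℕ) : ℂ) * mon ζ (p - 1 - 1) s t w * (w j * conj (w j))
          + (p : ℂ) * (t : ℂ) * mon ζ (p - 1) s (t - 1) w * (w j * conj (ζ j))
          - (p : ℂ) * mon ζ (p - 1) s t w
          + (s : ℂ) * (p : ℂ) * mon ζ (p - 1) (s - 1) t w * (conj (w j) * ζ j)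
          + (s : ℂ) * (t : ℂ) * mon ζ p (s - 1) (t - 1) w * (ζ j * conj (ζ j))) := by
        refine Finset.sum_congr rfl fun j _ => ?_
        rw [key j, wdz_gmon hq p s t j]; ring
    _ = _ := by
        rw [Finset.sum_add_distrib, Finset.sum_add_distrib, Finset.sum_sub_distrib,
          Finset.sum_add_distrib]
        simp only [← Finset.mul_sum]
        rw [sum_ww, sum_wz, sum_cwz, sum_ww]
        rw [Finset.sum_const, Finset.card_univ, Fintype.card_fin]
        rw [show p - 1 - 1 = p - 2 from by omega]
        push_cast
        ring
  done

end Aux5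
section Aux6
variable {N : ℕ}
local notation "Es" => EuclideanSpace ℂ (Fin N)

lemma wdz_finsum {n : ℕ} {w : Es} {F : Fin n → Es → ℂ}
    (hF : ∀ i, DifferentiableAt ℝ (F i) w) (j : Fin N) :
    wdz j (fun w => ∑ i, F i w) w = ∑ i, wdz j (F i) w := by
  simp only [wdz, fderiv_fun_sum fun i _ => hF i, ContinuousLinearMap.sum_apply]
  simp only [Finset.mul_sum, ← Finset.sum_sub_distrib]

lemma wdzbar_finsum {n : ℕ} {w : Es} {F : Fin n → Es → ℂ}
    (hF : ∀ i, DifferentiableAt ℝ (F i) w) (j : Fin N) :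
    wdzbar j (fun w => ∑ i, F i w) w = ∑ i, wdzbar j (F i) w := by
  simp only [wdzbar, fderiv_fun_sum fun i _ => hF i, ContinuousLinearMap.sum_apply]
  simp only [Finset.mul_sum, ← Finset.sum_add_distrib]

lemma Eop_congr_U {ζ w : Es} (hq : Qf ζ w ≠ 0) {f g : Es → ℂ}
    (h : ∀ w' : Es, Qf ζ w' ≠ 0 → f w' = g w') : Eop f w = Eop g w := by
  rw [Eop, Eop]
  exact Finset.sum_congr rfl fun j _ => by rw [wdz_congr (eventuallyEq_of_U hq h) j]

lemma Ebarop_congr_U {ζ w : Es} (hq : Qf ζ w ≠ 0) {f g : Es → ℂ}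
    (h : ∀ w' : Es, Qf ζ w' ≠ 0 → f w' = g w') : Ebarop f w = Ebarop g w := by
  rw [Ebarop, Ebarop]
  exact Finset.sum_congr rfl fun j _ => by rw [wdzbar_congr (eventuallyEq_of_U hq h) j]

lemma lapOp_congr_U {ζ w : Es} (hq : Qf ζ w ≠ 0) {f g : Es → ℂ}
    (h : ∀ w' : Es, Qf ζ w' ≠ 0 → f w' = g w') : lapOp f w = lapOp g w := by
  rw [lapOp, lapOp]
  refine Finset.sum_congr rfl fun j _ => ?_
  exact wdz_congr (eventuallyEq_of_U hq
    (fun w' h' => wdzbar_congr (eventuallyEq_of_U h' h) j)) j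

lemma Eop_sum {ζ w : Es} (hq : Qf ζ w ≠ 0) {n : ℕ} (c : Fin n → ℂ)
    (P : Fin n → ℕ) (S T : Fin n → ℤ) :
    Eop (fun w' => ∑ i, c i * mon ζ (P i) (S i) (T i) w') w
      = ∑ i, c i * Eop (mon ζ (P i) (S i) (T i)) w := by
  simp only [Eop]
  have h1 : ∀ j : Fin N, wdz j (fun w' => ∑ i, c i * mon ζ (P i) (S i) (T i) w') w
      = ∑ i, c i * wdz j (mon ζ (P i) (S i) (T i)) w := fun j => by
    rw [wdz_finsum (fun i => (diff_mon hq (P i) (S i) (T i)).const_mul (c i)) j]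
    exact Finset.sum_congr rfl fun i _ => wdz_const_mul (c i) (diff_mon hq _ _ _) j
  calc ∑ j, w j * wdz j (fun w' => ∑ i, c i * mon ζ (P i) (S i) (T i) w') w
      = ∑ j, ∑ i, c i * (w j * wdz j (mon ζ (P i) (S i) (T i)) w) := by
        refine Finset.sum_congr rfl fun j _ => ?_
        rw [h1 j, Finset.mul_sum]
        exact Finset.sum_congr rfl fun i _ => by ring
    _ = ∑ i, ∑ j, c i * (w j * wdz j (mon ζ (P i) (S i) (T i)) w) := Finset.sum_comm
    _ = _ := Finset.sum_congr rfl fun i _ => by rw [Finset.mul_sum]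

lemma Ebarop_sum {ζ w : Es} (hq : Qf ζ w ≠ 0) {n : ℕ} (c : Fin n → ℂ)
    (P : Fin n → ℕ) (S T : Fin n → ℤ) :
    Ebarop (fun w' => ∑ i, c i * mon ζ (P i) (S i) (T i) w') w
      = ∑ i, c i * Ebarop (mon ζ (P i) (S i) (T i)) w := by
  simp only [Ebarop]
  have h1 : ∀ j : Fin N, wdzbar j (fun w' => ∑ i, c i * mon ζ (P i) (S i) (T i) w') w
      = ∑ i, c i * wdzbar j (mon ζ (P i) (S i) (T i)) w := fun j => by
    rw [wdzbar_finsum (fun i => (diff_mon hq (P i) (S i) (T i)).const_mul (c i)) j]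
    exact Finset.sum_congr rfl fun i _ => wdzbar_const_mul (c i) (diff_mon hq _ _ _) j
  calc ∑ j, conj (w j) * wdzbar j (fun w' => ∑ i, c i * mon ζ (P i) (S i) (T i) w') w
      = ∑ j, ∑ i, c i * (conj (w j) * wdzbar j (mon ζ (P i) (S i) (T i)) w) := by
        refine Finset.sum_congr rfl fun j _ => ?_
        rw [h1 j, Finset.mul_sum]
        exact Finset.sum_congr rfl fun i _ => by ring
    _ = ∑ i, ∑ j, c i * (conj (w j) * wdzbar j (mon ζ (P i) (S i) (T i)) w) := Finset.sum_comm
    _ = _ := Finset.sum_congr rfl fun i _ => by rw [Finset.mul_sum]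

lemma lap_sum {ζ w : Es} (hq : Qf ζ w ≠ 0) {n : ℕ} (c : Fin n → ℂ)
    (P : Fin n → ℕ) (S T : Fin n → ℤ) :
    lapOp (fun w' => ∑ i, c i * mon ζ (P i) (S i) (T i) w') w
      = ∑ i, c i * lapOp (mon ζ (P i) (S i) (T i)) w := by
  simp only [lapOp]
  have h1 : ∀ j : Fin N, wdz j (wdzbar j (fun w' => ∑ i, c i * mon ζ (P i) (S i) (T i) w')) w
      = ∑ i, c i * wdz j (wdzbar j (mon ζ (P i) (S i) (T i))) w := by
    intro j
    have e1 : wdz j (wdzbar j (fun w' => ∑ i, c i * mon ζ (P i) (S i) (T i) w')) w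
        = wdz j (fun w' => ∑ i, c i * gmon ζ (P i) (S i) (T i) j w') w := by
      refine wdz_congr (eventuallyEq_of_U hq fun w' h' => ?_) j
      rw [wdzbar_finsum (fun i => (diff_mon h' (P i) (S i) (T i)).const_mul (c i)) j]
      refine Finset.sum_congr rfl fun i _ => ?_
      rw [wdzbar_const_mul (c i) (diff_mon h' _ _ _) j, wdzbar_mon_eq_gmon _ _ _ j h']
    rw [e1, wdz_finsum (fun i => (diff_gmon hq (P i) (S i) (T i) j).const_mul (c i)) j]
    refine Finset.sum_congr rfl fun i _ => ?_
    rw [wdz_const_mul (c i) (diff_gmon hq _ _ _ j) j,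
      wdz_congr (gmon_eventuallyEq hq (P i) (S i) (T i) j) j]
  calc ∑ j, wdz j (wdzbar j (fun w' => ∑ i, c i * mon ζ (P i) (S i) (T i) w')) w
      = ∑ j, ∑ i, c i * wdz j (wdzbar j (mon ζ (P i) (S i) (T i))) w :=
        Finset.sum_congr rfl fun j _ => h1 j
    _ = ∑ i, ∑ j, c i * wdz j (wdzbar j (mon ζ (P i) (S i) (T i))) w := Finset.sum_comm
    _ = _ := Finset.sum_congr rfl fun i _ => by rw [Finset.mul_sum]

end Aux6
section Aux7
variable {N : ℕ}
local notation "Es" => EuclideanSpace ℂ (Fin N)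

lemma hinner_ww {w : Es} : hinner w w = 1 - Xf w := by rw [Xf]; ring
lemma hinner_wz {ζ w : Es} : hinner w ζ = 1 - Bf ζ w := by rw [Bf]; ring
lemma hinner_zw {ζ w : Es} : hinner ζ w = 1 - Qf ζ w := by rw [Qf]; ring

lemma Eop_cmul {ζ w : Es} (hq : Qf ζ w ≠ 0) (c : ℂ) (p : ℕ) (s t : ℤ) :
    Eop (fun w' => c * mon ζ p s t w') w = c * Eop (mon ζ p s t) w := by
  simp only [Eop, Finset.mul_sum]
  exact Finset.sum_congr rfl fun j _ => by
    rw [wdz_const_mul c (diff_mon hq _ _ _) j]; ring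

lemma Ebarop_cmul {ζ w : Es} (hq : Qf ζ w ≠ 0) (c : ℂ) (p : ℕ) (s t : ℤ) :
    Ebarop (fun w' => c * mon ζ p s t w') w = c * Ebarop (mon ζ p s t) w := by
  simp only [Ebarop, Finset.mul_sum]
  exact Finset.sum_congr rfl fun j _ => by
    rw [wdzbar_const_mul c (diff_mon hq _ _ _) j]; ring

lemma lap_cmul {ζ w : Es} (hq : Qf ζ w ≠ 0) (c : ℂ) (p : ℕ) (s t : ℤ) :
    lapOp (fun w' => c * mon ζ p s t w') w = c * lapOp (mon ζ p s t) w := by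
  have h := lap_sum hq (n := 1) (fun _ => c) (fun _ => p) (fun _ => s) (fun _ => t)
  simpa using h

lemma zpow_factor1 {x : ℂ} (h : x ≠ 0) (s : ℤ) : x ^ (s - 1) = x ^ (s - 2) * x := by
  rw [← zpow_add_one₀ h]; congr 1; ring

lemma zpow_factor2 {x : ℂ} (h : x ≠ 0) (s : ℤ) : x ^ s = x ^ (s - 2) * x * x := by
  rw [← zpow_add_one₀ h, ← zpow_add_one₀ h]; congr 1; ring

set_option maxHeartbeats 1000000 in
lemma step_one {ζ w : Es} (hq : Qf ζ w ≠ 0) (c : ℂ) (p : ℕ) (s : ℤ) :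
    stepOp 0 (fun w' => c * mon ζ (p + 1) s s w') w
      = c * ((p : ℂ) + 1) * ((N : ℂ) - ((p : ℂ) + 1)) * mon ζ p s s w
        + c * (s : ℂ) ^ 2 * (1 - hinner ζ ζ) * mon ζ (p + 1) (s - 1) (s - 1) w
        + (-(c * (s : ℂ) * (((p : ℂ) + 1) + (s : ℂ))))
            * (mon ζ (p + 1) (s - 1) s w + mon ζ (p + 1) s (s - 1) w)
        + c * (((p : ℂ) + 1) + (s : ℂ)) ^ 2 * mon ζ (p + 1) s s w := by
  have hb := Bf_ne_zero hq
  simp only [stepOp, Complex.ofReal_zero, zero_mul, add_zero]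
  -- replace the inner function by the explicit 3-term combination G
  set cg : Fin 3 → ℂ := ![-(c * ((p : ℂ) + 1)), c * ((p : ℂ) + 1) + c * (s : ℂ), -(c * (s : ℂ))]
  set Pg : Fin 3 → ℕ := ![p, p + 1, p + 1]
  set Sg : Fin 3 → ℤ := ![s, s, s - 1]
  set Tg : Fin 3 → ℤ := ![s, s, s]
  have hG : ∀ w' : Es, Qf ζ w' ≠ 0 →
      Ebarop (fun w' => c * mon ζ (p + 1) s s w') w'
        = ∑ i, cg i * mon ζ (Pg i) (Sg i) (Tg i) w' := by
    intro w' h'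
    rw [Ebarop_cmul h' c (p + 1) s s, Ebarop_mon h' (p + 1) s s]
    simp only [cg, Pg, Sg, Tg, Fin.sum_univ_three, Matrix.cons_val_zero, Matrix.cons_val_one,
      Matrix.head_cons, Matrix.cons_val_two, Matrix.tail_cons]
    rw [hinner_ww, hinner_zw]
    simp only [Nat.add_sub_cancel]
    have e1 : Xf w' * mon ζ p s s w' = mon ζ (p + 1) s s w' := by
      simp only [mon]; rw [pow_succ]; ring
    have e2 : Qf ζ w' * mon ζ (p + 1) (s - 1) s w' = mon ζ (p + 1) s s w' := by
      simp only [mon]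
      rw [zpow_sub₀ h', zpow_one]
      field_simp
    push_cast
    linear_combination (c * ((p : ℂ) + 1)) * e1 + (c * (s : ℂ)) * e2
  have hE : Eop (fun w'' => Ebarop (fun w' => c * mon ζ (p + 1) s s w') w'') w
      = ∑ i, cg i * Eop (mon ζ (Pg i) (Sg i) (Tg i)) w := by
    rw [Eop_congr_U hq hG]
    exact Eop_sum hq cg Pg Sg Tg
  rw [hE, lap_cmul hq c (p + 1) s s, lap_mon hq (p + 1) s s]
  simp only [cg, Pg, Sg, Tg, Fin.sum_univ_three, Matrix.cons_val_zero, Matrix.cons_val_one,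
    Matrix.head_cons, Matrix.cons_val_two, Matrix.tail_cons]
  rw [Eop_mon hq p s s, Eop_mon hq (p + 1) s s, Eop_mon hq (p + 1) (s - 1) s]
  simp only [Nat.add_sub_cancel]
  rw [show p + 1 - 2 = p - 1 from by omega]
  rw [hinner_ww (w := w), hinner_wz (ζ := ζ) (w := w), hinner_zw (ζ := ζ) (w := w)]
  simp only [mon]
  rw [zpow_factor2 hq s, zpow_factor1 hq s, zpow_factor2 hb s, zpow_factor1 hb s]
  push_cast
  ring

end Aux7
section Aux8
variable {N : ℕ}
local notation "Es" => EuclideanSpace ℂ (Fin N)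

lemma two_eq_sum {ζ : Es} (a b : ℂ) (p1 p2 : ℕ) (s1 s2 t1 t2 : ℤ) (w' : Es) :
    a * mon ζ p1 s1 t1 w' + b * mon ζ p2 s2 t2 w'
      = ∑ i : Fin 2, (![a, b]) i * mon ζ ((![p1, p2]) i) ((![s1, s2]) i) ((![t1, t2]) i) w' := by
  simp [Fin.sum_univ_two]

lemma Ebarop_two {ζ w : Es} (hq : Qf ζ w ≠ 0) (a b : ℂ) (p1 p2 : ℕ) (s1 s2 t1 t2 : ℤ) :
    Ebarop (fun w' => a * mon ζ p1 s1 t1 w' + b * mon ζ p2 s2 t2 w') w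
      = a * Ebarop (mon ζ p1 s1 t1) w + b * Ebarop (mon ζ p2 s2 t2) w := by
  rw [Ebarop_congr_U hq (fun w' _ => two_eq_sum a b p1 p2 s1 s2 t1 t2 w'),
    Ebarop_sum hq (![a, b]) (![p1, p2]) (![s1, s2]) (![t1, t2])]
  simp [Fin.sum_univ_two]

lemma lap_two {ζ w : Es} (hq : Qf ζ w ≠ 0) (a b : ℂ) (p1 p2 : ℕ) (s1 s2 t1 t2 : ℤ) :
    lapOp (fun w' => a * mon ζ p1 s1 t1 w' + b * mon ζ p2 s2 t2 w') w
      = a * lapOp (mon ζ p1 s1 t1) w + b * lapOp (mon ζ p2 s2 t2) w := by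
  rw [lapOp_congr_U hq (fun w' _ => two_eq_sum a b p1 p2 s1 s2 t1 t2 w'),
    lap_sum hq (![a, b]) (![p1, p2]) (![s1, s2]) (![t1, t2])]
  simp [Fin.sum_univ_two]

set_option maxHeartbeats 2000000 in
lemma step_two {ζ w : Es} (hq : Qf ζ w ≠ 0) (a b : ℂ) (σ : ℝ) (s : ℤ) :
    stepOp σ (fun w' => a * mon ζ 0 s s w' + b * mon ζ 1 (s - 1) (s - 1) w') w
      = ((N : ℂ) * b - a * hinner ζ ζ * (s : ℂ) ^ 2 + a * (s : ℂ) ^ 2 - b - 2 * b * (σ : ℂ))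
            * mon ζ 0 (s - 1) (s - 1) w
        + (-(a * (s : ℂ) * (σ : ℂ)) - a * (s : ℂ) ^ 2)
            * (mon ζ 0 (s - 1) s w + mon ζ 0 s (s - 1) w)
        + (2 * a * (s : ℂ) * (σ : ℂ) + a * (s : ℂ) ^ 2 + a * (σ : ℂ) ^ 2) * mon ζ 0 s s w
        + b * (1 - hinner ζ ζ) * (1 - (s : ℂ)) ^ 2 * mon ζ 1 (s - 2) (s - 2) w
        + (b * (s : ℂ) - b * (s : ℂ) * (σ : ℂ) - b * (s : ℂ) ^ 2 + b * (σ : ℂ))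
            * (mon ζ 1 (s - 2) (s - 1) w + mon ζ 1 (s - 1) (s - 2) w)
        + (2 * b * (s : ℂ) * (σ : ℂ) + b * (s : ℂ) ^ 2 + b * (σ : ℂ) ^ 2)
            * mon ζ 1 (s - 1) (s - 1) w := by
  have hb := Bf_ne_zero hq
  simp only [stepOp]
  set cg : Fin 5 → ℂ := ![-(a * (s : ℂ)), a * (s : ℂ) + a * (σ : ℂ), -b,
    b + b * ((s : ℂ) - 1) + b * (σ : ℂ), -(b * ((s : ℂ) - 1))]
  set Pg : Fin 5 → ℕ := ![0, 0, 0, 1, 1]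
  set Sg : Fin 5 → ℤ := ![s - 1, s, s - 1, s - 1, s - 2]
  set Tg : Fin 5 → ℤ := ![s, s, s - 1, s - 1, s - 1]
  have hG : ∀ w' : Es, Qf ζ w' ≠ 0 →
      Ebarop (fun w' => a * mon ζ 0 s s w' + b * mon ζ 1 (s - 1) (s - 1) w') w'
          + (σ : ℂ) * (a * mon ζ 0 s s w' + b * mon ζ 1 (s - 1) (s - 1) w')
        = ∑ i, cg i * mon ζ (Pg i) (Sg i) (Tg i) w' := by
    intro w' h'
    rw [Ebarop_two h' a b 0 1 s (s - 1) s (s - 1), Ebarop_mon h' 0 s s,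
      Ebarop_mon h' 1 (s - 1) (s - 1)]
    simp only [cg, Pg, Sg, Tg, Fin.sum_univ_five, Matrix.cons_val_zero, Matrix.cons_val_one,
      Matrix.head_cons, Matrix.cons_val_two, Matrix.tail_cons, Matrix.cons_val_three,
      Matrix.cons_val_four]
    rw [hinner_ww, hinner_zw]
    norm_num
    rw [show s - 1 - 1 = s - 2 from by ring]
    simp only [mon]
    rw [zpow_factor2 h' s, zpow_factor1 h' s, zpow_factor2 (Bf_ne_zero h') s,
      zpow_factor1 (Bf_ne_zero h') s]
    push_cast
    ring
  have hE : Eop (fun w'' => Ebarop (fun w' => a * mon ζ 0 s s w' + b * mon ζ 1 (s - 1) (s - 1) w') w''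
      + (σ : ℂ) * (a * mon ζ 0 s s w'' + b * mon ζ 1 (s - 1) (s - 1) w'')) w
      = ∑ i, cg i * Eop (mon ζ (Pg i) (Sg i) (Tg i)) w := by
    rw [Eop_congr_U hq hG]
    exact Eop_sum hq cg Pg Sg Tg
  rw [hE, hG w hq, lap_two hq a b 0 1 s (s - 1) s (s - 1), lap_mon hq 0 s s,
    lap_mon hq 1 (s - 1) (s - 1)]
  simp only [cg, Pg, Sg, Tg, Fin.sum_univ_five, Matrix.cons_val_zero, Matrix.cons_val_one,
    Matrix.head_cons, Matrix.cons_val_two, Matrix.tail_cons, Matrix.cons_val_three,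
    Matrix.cons_val_four]
  rw [Eop_mon hq 0 (s - 1) s, Eop_mon hq 0 s s, Eop_mon hq 0 (s - 1) (s - 1),
    Eop_mon hq 1 (s - 1) (s - 1), Eop_mon hq 1 (s - 2) (s - 1)]
  norm_num
  rw [hinner_ww (w := w), hinner_wz (ζ := ζ) (w := w), hinner_zw (ζ := ζ) (w := w)]
  rw [show s - 1 - 1 = s - 2 from by ring]
  simp only [mon]
  rw [zpow_factor2 hq s, zpow_factor1 hq s, zpow_factor2 hb s, zpow_factor1 hb s]
  push_cast
  ring
end Aux8
section Aux9
variable {N : ℕ}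
local notation "Es" => EuclideanSpace ℂ (Fin N)

lemma stepOp_congr_U {ζ w : Es} (hq : Qf ζ w ≠ 0) {f g : Es → ℂ} (σ : ℝ)
    (h : ∀ w' : Es, Qf ζ w' ≠ 0 → f w' = g w') : stepOp σ f w = stepOp σ g w := by
  simp only [stepOp]
  rw [lapOp_congr_U hq h, Ebarop_congr_U hq h, h w hq,
    Eop_congr_U hq (f := fun w' => Ebarop f w' + (σ : ℂ) * f w')
      (g := fun w' => Ebarop g w' + (σ : ℂ) * g w')
      (fun w' h' => by
        show Ebarop f w' + (σ : ℂ) * f w' = Ebarop g w' + (σ : ℂ) * g w'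
        rw [Ebarop_congr_U h' h, h w' h'])]

lemma stepOp_zero_eq (f : Es → ℂ) (z : Es) :
    stepOp 0 f z = Eop (Ebarop f) z - lapOp f z := by
  simp only [stepOp, Complex.ofReal_zero, zero_mul, add_zero]

lemma K_eq_mon (z : Es) (w : Es) :
    ((1 - ‖w‖ ^ 2 : ℝ) : ℂ) / ((‖1 - hinner z w‖ ^ 2 : ℝ) : ℂ)
      = 1 * mon z 1 (-1) (-1) w := by
  have hnum : ((1 - ‖w‖ ^ 2 : ℝ) : ℂ) = Xf w := by
    rw [Xf, hinner_self]; push_cast; ring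
  have hden : ((‖1 - hinner z w‖ ^ 2 : ℝ) : ℂ) = Qf z w * Bf z w := by
    rw [Complex.sq_norm]
    push_cast
    rw [← Complex.mul_conj]
    rw [Qf, Bf, map_sub, map_one, conj_hinner]
  rw [hnum, hden, mon]
  simp only [zpow_neg, zpow_one, pow_one]
  rw [div_eq_mul_inv, mul_inv]
  ring

lemma g_eq_mon (ξ : Es) (m : ℕ) (w : Es) :
    ((m.factorial : ℂ) ^ 2 * (((1 - ‖w‖ ^ 2) ^ (m + 1) : ℝ) : ℂ))
        / ((‖1 - hinner w ξ‖ ^ (2 * (m + 1)) : ℝ) : ℂ)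
      = (m.factorial : ℂ) ^ 2 * mon ξ (m + 1) (-(m : ℤ) - 1) (-(m : ℤ) - 1) w := by
  have hnum : (((1 - ‖w‖ ^ 2) ^ (m + 1) : ℝ) : ℂ) = Xf w ^ (m + 1) := by
    push_cast
    rw [show Xf w = ((1 - ‖w‖ ^ 2 : ℝ) : ℂ) from by rw [Xf, hinner_self]; push_cast; ring]
    push_cast; ring
  have hden : ((‖1 - hinner w ξ‖ ^ (2 * (m + 1)) : ℝ) : ℂ)
      = (Qf ξ w * Bf ξ w) ^ (m + 1) := by
    rw [pow_mul, Complex.sq_norm]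
    push_cast
    rw [← Complex.mul_conj]
    rw [show ((1 : ℂ) - hinner w ξ) = Bf ξ w from by rw [Bf]]
    rw [show conj (Bf ξ w) = Qf ξ w from by rw [Bf, Qf, map_sub, map_one, conj_hinner]]
    rw [mul_comm]
  rw [hnum, hden]
  have hexp : ∀ x : ℂ, x ^ (-(m : ℤ) - 1) = (x ^ (m + 1))⁻¹ := by
    intro x
    rw [show -(m : ℤ) - 1 = -((m + 1 : ℕ) : ℤ) from by push_cast; ring, zpow_neg, zpow_natCast]
  rw [mon, hexp, hexp, mul_pow, div_eq_mul_inv, mul_inv]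
  ring

set_option maxHeartbeats 2000000 in
lemma main_ind (z : Es) (m : ℕ) : ∀ w : Es, Qf z w ≠ 0 →
    iterOp m (fun w' =>
        ((1 - ‖w'‖ ^ 2 : ℝ) : ℂ) / ((‖1 - hinner z w'‖ ^ 2 : ℝ) : ℂ)) w
      = ((m.factorial : ℂ) ^ 2 * ((m : ℂ) + 1) * ((N : ℂ) - ((m : ℂ) + 1)) * Xf z ^ m)
            * mon z 0 (-(m : ℤ) - 1) (-(m : ℤ) - 1) w
        + ((m.factorial : ℂ) ^ 2 * ((m : ℂ) + 1) ^ 2 * Xf z ^ (m + 1))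
            * mon z 1 (-(m : ℤ) - 1 - 1) (-(m : ℤ) - 1 - 1) w := by
  induction m with
  | zero =>
      intro w hq
      have h0 : iterOp 0 (fun w' =>
          ((1 - ‖w'‖ ^ 2 : ℝ) : ℂ) / ((‖1 - hinner z w'‖ ^ 2 : ℝ) : ℂ)) w
          = stepOp 0 (fun w' => (1 : ℂ) * mon z 1 (-1) (-1) w') w := by
        simp only [iterOp]
        exact stepOp_congr_U hq 0 fun w' _ => K_eq_mon z w'
      rw [h0, show (-1 : ℤ) = -1 + 1 - 1 from by ring]
      rw [step_one hq 1 0 (-1 + 1 - 1)]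
      rw [hinner_ww (w := z)]
      norm_num [Nat.factorial]
  | succ m ih =>
      intro w hq
      have h0 : iterOp (m + 1) (fun w' =>
          ((1 - ‖w'‖ ^ 2 : ℝ) : ℂ) / ((‖1 - hinner z w'‖ ^ 2 : ℝ) : ℂ)) w
          = stepOp ((m : ℝ) + 1) (fun w' =>
              ((m.factorial : ℂ) ^ 2 * ((m : ℂ) + 1) * ((N : ℂ) - ((m : ℂ) + 1)) * Xf z ^ m)
                  * mon z 0 (-(m : ℤ) - 1) (-(m : ℤ) - 1) w'
                + ((m.factorial : ℂ) ^ 2 * ((m : ℂ) + 1) ^ 2 * Xf z ^ (m + 1))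
                  * mon z 1 (-(m : ℤ) - 1 - 1) (-(m : ℤ) - 1 - 1) w') w := by
        simp only [iterOp]
        exact stepOp_congr_U hq _ fun w' h' => ih w' h'
      rw [h0]
      rw [step_two hq _ _ ((m : ℝ) + 1) (-(m : ℤ) - 1)]
      rw [hinner_ww (w := z)]
      rw [show (-((m + 1 : ℕ) : ℤ) - 1 : ℤ) = -(m : ℤ) - 1 - 1 from by push_cast; ring,
        show (-(m : ℤ) - 1 - 1 - 1 : ℤ) = -(m : ℤ) - 1 - 2 from by ring]
      push_cast [Nat.factorial_succ]
      ring
end Aux9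

set_option maxHeartbeats 1000000

/-- Lemma 2.1, identity (2.2). -/
theorem stmt1 {N : ℕ} (hN : 1 ≤ N) (m : ℕ) (hm : 1 ≤ m)
    (z ξ : EuclideanSpace ℂ (Fin N))
    (hz : z ∈ ball (0 : EuclideanSpace ℂ (Fin N)) 1)
    (hξ : ξ ∈ ball (0 : EuclideanSpace ℂ (Fin N)) 1) :
    iterOp m (fun w =>
        ((1 - ‖w‖ ^ 2 : ℝ) : ℂ) / ((‖1 - hinner z w‖ ^ 2 : ℝ) : ℂ)) ξ
      = (Eop (Ebarop (fun w =>
            ((m.factorial : ℂ) ^ 2 * (((1 - ‖w‖ ^ 2) ^ (m + 1) : ℝ) : ℂ))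
              / ((‖1 - hinner w ξ‖ ^ (2 * (m + 1)) : ℝ) : ℂ))) z
          - lapOp (fun w =>
            ((m.factorial : ℂ) ^ 2 * (((1 - ‖w‖ ^ 2) ^ (m + 1) : ℝ) : ℂ))
              / ((‖1 - hinner w ξ‖ ^ (2 * (m + 1)) : ℝ) : ℂ)) z) := by
  have hz1 : ‖z‖ < 1 := mem_ball_zero_iff.mp hz
  have hξ1 : ‖ξ‖ < 1 := mem_ball_zero_iff.mp hξ
  have hqξ : Qf z ξ ≠ 0 := Qf_ne_zero hz1 hξ1
  have hqz : Qf ξ z ≠ 0 := Qf_ne_zero hξ1 hz1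
  rw [main_ind z m ξ hqξ]
  have hg : (fun w : EuclideanSpace ℂ (Fin N) =>
        ((m.factorial : ℂ) ^ 2 * (((1 - ‖w‖ ^ 2) ^ (m + 1) : ℝ) : ℂ))
          / ((‖1 - hinner w ξ‖ ^ (2 * (m + 1)) : ℝ) : ℂ))
      = fun w => (m.factorial : ℂ) ^ 2 * mon ξ (m + 1) (-(m : ℤ) - 1) (-(m : ℤ) - 1) w :=
    funext fun w => g_eq_mon ξ m w
  rw [hg, ← stepOp_zero_eq, step_one hqz ((m.factorial : ℂ) ^ 2) m (-(m : ℤ) - 1)]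
  rw [hinner_ww (w := ξ)]
  simp only [mon, show Qf ξ z = Bf z ξ from rfl, show Bf ξ z = Qf z ξ from rfl]
  push_cast
  ring

end
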